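/- If S_n is a sum of independent random variables T_1,...,T_n with T_j exponentially distributed with rate j, then for every t ≥ 0 the probability P(S_n ≤ t) equals e^{-nt}(e^t - 1)^n. -/

import Mathlib

open MeasureTheory ProbabilityTheory Real
open scoped ENNReal

lemma alg_step (n : ℕ) (t y : ℝ) :
    ((n:ℝ)+1) * exp (-(((n:ℝ)+1)*y)) * (1 - exp (-(t-y)))^n
      = -(((n:ℝ)+1) * (exp (-y) - exp (-t)) ^ n * (exp (-y) * -1)) := by
  have h1 : exp (-(((n:ℝ)+1)*y)) = exp (-y) * exp (-y) ^ n := by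
    rw [← Real.exp_nat_mul, ← Real.exp_add]; ring_nf
  have h2 : exp (-y) * exp (-(t-y)) = exp (-t) := by
    rw [← Real.exp_add]; ring_nf
  have h3 : (exp (-y)) ^ n * (1 - exp (-(t-y)))^n = (exp (-y) - exp (-t)) ^ n := by
    rw [← mul_pow, mul_sub, mul_one, h2]
  rw [h1, ← h3]; ring

lemma integral_step (n : ℕ) (t : ℝ) :
    ∫ y in (0:ℝ)..t, ((n:ℝ)+1) * exp (-(((n:ℝ)+1)*y)) * (1 - exp (-(t-y)))^n
      = (1 - exp (-t))^(n+1) := by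
  have hd : ∀ y ∈ Set.uIcc (0:ℝ) t,
      HasDerivAt (fun y => -((exp (-y) - exp (-t)) ^ (n+1)))
        (((n:ℝ)+1) * exp (-(((n:ℝ)+1)*y)) * (1 - exp (-(t-y)))^n) y := by
    intro y _
    have h : HasDerivAt (fun y : ℝ => exp (-y) - exp (-t)) (exp (-y) * -1) y := by
      simpa using (((hasDerivAt_id y).neg).exp).sub_const (exp (-t))
    have := (h.pow (n+1)).neg
    refine this.congr_deriv ?_
    rw [alg_step]
    push_cast
    ring_nf
  have hcont : IntervalIntegrable
      (fun y => ((n:ℝ)+1) * exp (-(((n:ℝ)+1)*y)) * (1 - exp (-(t-y)))^n)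
      volume 0 t := by
    apply Continuous.intervalIntegrable
    continuity
  rw [intervalIntegral.integral_eq_sub_of_hasDerivAt hd hcont]
  simp [sub_self, Real.exp_zero, zero_pow (Nat.succ_ne_zero n)]

lemma iIndepFun_precomp_inj {Ω ι ι' : Type*} [MeasurableSpace Ω] {μ : Measure Ω}
    {f : ι → Ω → ℝ} (g : ι' → ι) (hg : Function.Injective g)
    (h : iIndepFun f μ) :
    iIndepFun (fun j => f (g j)) μ := by
  classical
  rw [iIndepFun_iff_measure_inter_preimage_eq_mul] at h ⊢
  intro S sets hsets
  set sets' : ι → Set ℝ := fun i =>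
    if h : ∃ j ∈ S, g j = i then sets h.choose else Set.univ with hsets'def
  have hkey : ∀ j ∈ S, sets' (g j) = sets j := by
    intro j hj
    have hex : ∃ j' ∈ S, g j' = g j := ⟨j, hj, rfl⟩
    simp only [hsets'def, dif_pos hex]
    exact congrArg sets (hg hex.choose_spec.2)
  have := h (S.image g) (sets := sets') ?_
  · rw [← Finset.set_biInter_coe, Finset.coe_image, Set.biInter_image,
      Finset.set_biInter_coe] at this
    rw [Finset.prod_image (fun x hx y hy hxy => hg hxy)] at this
    have e1 : (⋂ x ∈ S, f (g x) ⁻¹' sets' (g x)) = ⋂ i ∈ S, f (g i) ⁻¹' sets i :=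
      Set.iInter₂_congr fun j hj => by rw [hkey j hj]
    have e2 : (∏ x ∈ S, μ (f (g x) ⁻¹' sets' (g x))) = ∏ i ∈ S, μ (f (g i) ⁻¹' sets i) :=
      Finset.prod_congr rfl fun j hj => by rw [hkey j hj]
    rw [e1, e2] at this
    exact this
  · intro i hi
    simp only [Finset.mem_image] at hi
    obtain ⟨j, hj, rfl⟩ := hi
    rw [hkey j hj]
    exact hsets j hj

noncomputable def Fcdf (n : ℕ) (t : ℝ) : ℝ := if 0 ≤ t then (1 - exp (-t)) ^ n else 0

lemma Fcdf_meas (n : ℕ) : Measurable (Fcdf n) := by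
  unfold Fcdf
  exact Measurable.ite measurableSet_Ici (by fun_prop) measurable_const

lemma Fcdf_nonneg (n : ℕ) (t : ℝ) : 0 ≤ Fcdf n t := by
  unfold Fcdf
  split
  · have h1 : exp (-t) ≤ 1 := exp_le_one_iff.mpr (by linarith)
    have : (0:ℝ) ≤ 1 - exp (-t) := by linarith
    positivity
  · exact le_refl 0

lemma conv_step (n : ℕ) (t : ℝ) :
    ∫⁻ y, ENNReal.ofReal (Fcdf n (t - y)) ∂(expMeasure ((n:ℝ)+1))
      = ENNReal.ofReal (Fcdf (n+1) t) := by
  set r : ℝ := (n:ℝ)+1 with hr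
  have hrpos : 0 < r := by positivity
  have hexp : expMeasure r = volume.withDensity (exponentialPDF r) := rfl
  have hpdfm : Measurable (exponentialPDF r) :=
    (measurable_exponentialPDFReal r).ennreal_ofReal
  have hgm : Measurable (fun y => ENNReal.ofReal (Fcdf n (t - y))) :=
    ((Fcdf_meas n).comp (measurable_const.sub measurable_id)).ennreal_ofReal
  rw [hexp, lintegral_withDensity_eq_lintegral_mul _ hpdfm hgm]
  set h : ℝ → ℝ≥0∞ := fun y => exponentialPDF r y * ENNReal.ofReal (Fcdf n (t - y)) with hh
  have hzero : ∀ y : ℝ, y ∉ Set.Icc 0 t → h y = 0 := by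
    intro y hy
    simp only [Set.mem_Icc, not_and_or, not_le] at hy
    rcases hy with hy | hy
    · simp [hh, exponentialPDF_of_neg hy]
    · have : Fcdf n (t - y) = 0 := if_neg (by linarith)
      simp [hh, this]
  by_cases ht : 0 ≤ t
  · have hind : (fun y => (exponentialPDF r * fun y => ENNReal.ofReal (Fcdf n (t - y))) y)
        = (Set.Icc (0:ℝ) t).indicator h := by
      funext y
      by_cases hy : y ∈ Set.Icc (0:ℝ) t
      · rw [Set.indicator_of_mem hy]; rfl
      · rw [Set.indicator_of_notMem hy, ← hzero y hy]; rfl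
    rw [hind]
    rw [show (∫⁻ y, (Set.Icc (0:ℝ) t).indicator h y) = ∫⁻ y in Set.Icc (0:ℝ) t, h y from
      lintegral_indicator measurableSet_Icc h]
    set g : ℝ → ℝ := fun y => r * exp (-(r*y)) * (1 - exp (-(t-y)))^n with hg
    have hcong : ∫⁻ y in Set.Icc 0 t, h y = ∫⁻ y in Set.Icc 0 t, ENNReal.ofReal (g y) := by
      apply setLIntegral_congr_fun measurableSet_Icc
      intro y hy
      rw [hh, hg]
      simp only
      rw [exponentialPDF_of_nonneg hy.1]
      have h1 : Fcdf n (t - y) = (1 - exp (-(t-y)))^n := if_pos (by linarith [hy.2])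
      rw [h1, ← ENNReal.ofReal_mul (by positivity)]
    rw [hcong]
    have hgcont : Continuous g := by rw [hg]; fun_prop
    have hint : IntegrableOn g (Set.Icc 0 t) volume := hgcont.integrableOn_Icc
    have hnn : 0 ≤ᵐ[volume.restrict (Set.Icc 0 t)] g := by
      rw [Filter.EventuallyLE, ae_restrict_iff' measurableSet_Icc]
      apply ae_of_all
      intro y hy
      have h2 : exp (-(t-y)) ≤ 1 := exp_le_one_iff.mpr (by linarith [hy.2])
      have h3 : (0:ℝ) ≤ 1 - exp (-(t-y)) := by linarith
      simp only [hg, Pi.zero_apply]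
      positivity
    rw [← ofReal_integral_eq_lintegral_ofReal hint hnn]
    congr 1
    rw [MeasureTheory.integral_Icc_eq_integral_Ioc, ← intervalIntegral.integral_of_le ht]
    rw [integral_step n t]
    rw [Fcdf, if_pos ht]
  · have : ∀ y : ℝ, (exponentialPDF r * fun y => ENNReal.ofReal (Fcdf n (t - y))) y = 0 := by
      intro y
      by_cases hy : y ∈ Set.Icc (0:ℝ) t
      · exact absurd (le_trans hy.1 hy.2) ht
      · exact hzero y hy
    rw [lintegral_congr this]
    simp [Fcdf, if_neg ht]

lemma key_lemma {Ω : Type*} [MeasurableSpace Ω] :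
    ∀ (n : ℕ) (P : Measure Ω) [IsProbabilityMeasure P] (T : Fin n → Ω → ℝ),
      (∀ j, Measurable (T j)) → iIndepFun T P →
      (∀ j : Fin n, Measure.map (T j) P = expMeasure ((j : ℕ) + 1)) →
      ∀ t : ℝ, P {ω | ∑ j, T j ω ≤ t} = ENNReal.ofReal (Fcdf n t) := by
  intro n
  induction n with
  | zero =>
    intro P _ T hmeas hindep hlaw t
    simp only [Finset.univ_eq_empty, Finset.sum_empty, Fcdf, pow_zero]
    by_cases ht : 0 ≤ t
    · have : {ω : Ω | (0:ℝ) ≤ t} = Set.univ := by ext ω; simp [ht]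
      rw [this, if_pos ht, measure_univ, ENNReal.ofReal_one]
    · have : {ω : Ω | (0:ℝ) ≤ t} = ∅ := by ext ω; simp [ht]
      rw [this, if_neg ht, measure_empty, ENNReal.ofReal_zero]
  | succ n ih =>
    intro P _ T hmeas hindep hlaw t
    set X : Ω → ℝ := T (Fin.last n) with hX
    set S : Ω → ℝ := fun ω => ∑ j : Fin n, T j.castSucc ω with hS
    have hSmeas : Measurable S := by
      apply Finset.measurable_sum
      intro j _
      exact hmeas _
    have hXmeas : Measurable X := hmeas _
    have hsubindep : iIndepFun
        (fun j : Fin n => T j.castSucc) P :=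
      iIndepFun_precomp_inj Fin.castSucc (Fin.castSucc_injective n) hindep
    have hsublaw : ∀ j : Fin n, Measure.map (T j.castSucc) P = expMeasure ((j : ℕ) + 1) := by
      intro j
      simpa using hlaw j.castSucc
    have IH : ∀ s : ℝ, P {ω | S ω ≤ s} = ENNReal.ofReal (Fcdf n s) :=
      ih P (fun j => T j.castSucc) (fun j => hmeas _) hsubindep hsublaw
    have hSX : IndepFun S X P := by
      have h1 : IndepFun (∑ j ∈ Finset.univ.erase (Fin.last n), T j) (T (Fin.last n)) P :=
        hindep.indepFun_finset_sum_of_notMem hmeas (Finset.notMem_erase _ _)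
      have h2 : (∑ j ∈ Finset.univ.erase (Fin.last n), T j) = S := by
        funext ω
        rw [Finset.sum_apply]
        have h4 := Fin.sum_univ_castSucc (fun j => T j ω)
        have h3 := Finset.sum_erase_add Finset.univ (fun j => T j ω)
          (Finset.mem_univ (Fin.last n))
        simp only [hS]
        linarith
      exact h2 ▸ h1
    have hXlaw : Measure.map X P = expMeasure ((n:ℝ)+1) := by
      have := hlaw (Fin.last n)
      simpa [Fin.val_last] using this
    -- rewrite the event
    have hset : {ω | ∑ j, T j ω ≤ t} = {ω | S ω + X ω ≤ t} := by
      ext ω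
      simp only [Set.mem_setOf_eq, hS, hX, Fin.sum_univ_castSucc]
    rw [hset]
    -- pass to the product measure
    have hms : MeasurableSet {p : ℝ × ℝ | p.1 + p.2 ≤ t} :=
      measurableSet_le (measurable_fst.add measurable_snd) measurable_const
    have hmap : P.map (fun ω => (S ω, X ω)) = (P.map S).prod (P.map X) :=
      (indepFun_iff_map_prod_eq_prod_map_map hSmeas.aemeasurable
        hXmeas.aemeasurable).mp hSX
    have h5 : P {ω | S ω + X ω ≤ t}
        = (P.map (fun ω => (S ω, X ω))) {p : ℝ × ℝ | p.1 + p.2 ≤ t} := by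
      rw [Measure.map_apply (hSmeas.prodMk hXmeas) hms]
      rfl
    rw [h5, hmap, hXlaw]
    haveI : IsProbabilityMeasure (P.map S) := Measure.isProbabilityMeasure_map hSmeas.aemeasurable
    haveI : IsProbabilityMeasure (expMeasure ((n:ℝ)+1)) :=
      isProbabilityMeasure_expMeasure (by positivity)
    rw [Measure.prod_apply_symm hms]
    have h6 : ∀ y : ℝ, (P.map S) ((fun x => (x, y)) ⁻¹' {p : ℝ × ℝ | p.1 + p.2 ≤ t})
        = ENNReal.ofReal (Fcdf n (t - y)) := by
      intro y
      have : ((fun x : ℝ => (x, y)) ⁻¹' {p : ℝ × ℝ | p.1 + p.2 ≤ t}) = Set.Iic (t - y) := by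
        ext x
        simp [le_sub_iff_add_le]
      rw [this, Measure.map_apply hSmeas measurableSet_Iic]
      exact IH (t - y)
    calc ∫⁻ y, (P.map S) ((fun x => (x, y)) ⁻¹' {p : ℝ × ℝ | p.1 + p.2 ≤ t})
          ∂(expMeasure ((n:ℝ)+1))
        = ∫⁻ y, ENNReal.ofReal (Fcdf n (t - y)) ∂(expMeasure ((n:ℝ)+1)) := by
          exact lintegral_congr h6
      _ = ENNReal.ofReal (Fcdf (n+1) t) := conv_step n t

theorem prob_sum_exponential_le (n : ℕ) (hn : 1 ≤ n)
    {Ω : Type*} [MeasurableSpace Ω] (P : Measure Ω) [IsProbabilityMeasure P]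
    (T : Fin n → Ω → ℝ) (hmeas : ∀ j, Measurable (T j))
    (hindep : iIndepFun T P)
    (hlaw : ∀ j : Fin n, Measure.map (T j) P = expMeasure ((j : ℕ) + 1))
    (t : ℝ) (ht : 0 ≤ t) :
    P {ω | ∑ j, T j ω ≤ t} = ENNReal.ofReal (exp (-(n : ℝ) * t) * (exp t - 1) ^ n) := by
  rw [key_lemma n P T hmeas hindep hlaw t]
  congr 1
  rw [Fcdf, if_pos ht]
  have h1 : 1 - exp (-t) = exp (-t) * (exp t - 1) := by
    rw [mul_sub, ← exp_add]; simp
  rw [h1, mul_pow, ← Real.exp_nat_mul]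
  ring_nf
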